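/- arXiv:0801.1050 — 6 statements merged into one kernel-verified Lean document; each statement's English description precedes it below -/
import Mathlib

section
/- Let X be a real-valued random variable and C ≥ 0, λ ∈ [−1,1]. If E[cosh X] ≤ cosh C, then E[cosh(λX)] ≤ cosh(λC). -/
open MeasureTheory Real

private lemma aux_g (l : ℝ) (hl0 : 0 ≤ l) (hl1 : l ≤ 1) {x : ℝ} (hx : 0 ≤ x) :
    l * cosh (l * x) * sinh x ≤ sinh (l * x) * cosh x := by
  set g : ℝ → ℝ := fun t => sinh (l * t) * cosh t - l * cosh (l * t) * sinh t with hg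
  have hderiv : ∀ t : ℝ, HasDerivAt g ((1 - l ^ 2) * (sinh (l * t) * sinh t)) t := by
    intro t
    have h1 : HasDerivAt (fun s : ℝ => l * s) l t := by
      simpa using (hasDerivAt_id t).const_mul l
    have := ((h1.sinh).mul (Real.hasDerivAt_cosh t)).sub
      (((h1.cosh).const_mul l).mul (Real.hasDerivAt_sinh t))
    refine this.congr_deriv ?_
    ring
  have mono : MonotoneOn g (Set.Ici (0 : ℝ)) := by
    apply monotoneOn_of_deriv_nonneg (convex_Ici 0)
    · exact (Continuous.continuousOn (by fun_prop))
    · intro t _; exact (hderiv t).differentiableAt.differentiableWithinAt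
    · intro t ht
      rw [interior_Ici] at ht
      rw [(hderiv t).deriv]
      have h2 : 0 ≤ sinh (l * t) := sinh_nonneg_iff.2 (mul_nonneg hl0 ht.le)
      have h3 : 0 ≤ sinh t := sinh_nonneg_iff.2 ht.le
      have h4 : l ^ 2 ≤ 1 := by nlinarith
      have := mul_nonneg h2 h3
      nlinarith
  have h0 : g 0 ≤ g x := mono Set.self_mem_Ici hx hx
  simp [hg, sinh_zero, cosh_zero] at h0
  linarith

private lemma aux_ratio (l : ℝ) (hl0 : 0 ≤ l) (hl1 : l ≤ 1) {u v : ℝ} (hu : 0 < u)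
    (huv : u ≤ v) : sinh (l * v) * sinh u ≤ sinh (l * u) * sinh v := by
  set f : ℝ → ℝ := fun t => sinh (l * t) / sinh t with hf
  have hd : ∀ t : ℝ, 0 < t → HasDerivAt f
      ((l * cosh (l * t) * sinh t - sinh (l * t) * cosh t) / (sinh t) ^ 2) t := by
    intro t ht
    have h1 : HasDerivAt (fun s : ℝ => l * s) l t := by
      simpa using (hasDerivAt_id t).const_mul l
    have := (h1.sinh).div (Real.hasDerivAt_sinh t) (ne_of_gt (sinh_pos_iff.2 ht))
    refine this.congr_deriv ?_
    ring
  have anti : AntitoneOn f (Set.Ici u) := by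
    apply antitoneOn_of_deriv_nonpos (convex_Ici u)
    · apply ContinuousOn.div (by fun_prop) (by fun_prop)
      intro t ht
      exact ne_of_gt (sinh_pos_iff.2 (lt_of_lt_of_le hu ht))
    · intro t ht
      rw [interior_Ici] at ht
      exact (hd t (hu.trans ht)).differentiableAt.differentiableWithinAt
    · intro t ht
      rw [interior_Ici] at ht
      have htp : 0 < t := hu.trans ht
      rw [(hd t htp).deriv]
      apply div_nonpos_of_nonpos_of_nonneg
      · have := aux_g l hl0 hl1 htp.le
        linarith
      · positivity
  have h2 : f v ≤ f u := anti Set.self_mem_Ici huv huv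
  have hsu : 0 < sinh u := sinh_pos_iff.2 hu
  have hsv : 0 < sinh v := sinh_pos_iff.2 (hu.trans_le huv)
  rw [hf] at h2
  simp only [div_le_div_iff₀ hsv hsu] at h2
  linarith

private lemma aux_key (l : ℝ) (hl0 : 0 ≤ l) (hl1 : l ≤ 1) {C : ℝ} (hC : 0 < C) (x : ℝ) :
    cosh (l * x) * sinh C ≤ cosh (l * C) * sinh C + l * sinh (l * C) * (cosh x - cosh C) := by
  have main : ∀ y : ℝ, 0 ≤ y →
      cosh (l * y) * sinh C ≤ cosh (l * C) * sinh C + l * sinh (l * C) * (cosh y - cosh C) := by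
    intro y hy
    set F : ℝ → ℝ := fun t =>
      cosh (l * C) * sinh C + l * sinh (l * C) * (cosh t - cosh C) - cosh (l * t) * sinh C
      with hF
    have hderiv : ∀ t : ℝ, HasDerivAt F
        (l * sinh (l * C) * sinh t - l * sinh (l * t) * sinh C) t := by
      intro t
      have h1 : HasDerivAt (fun s : ℝ => l * s) l t := by
        simpa using (hasDerivAt_id t).const_mul l
      have := ((((Real.hasDerivAt_cosh t).sub_const (cosh C)).const_mul
        (l * sinh (l * C))).const_add (cosh (l * C) * sinh C)).sub
        ((h1.cosh).mul_const (sinh C))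
      refine this.congr_deriv ?_
      ring
    have hFC : F C = 0 := by simp [hF]
    suffices h : 0 ≤ F y by
      simp only [hF] at h
      linarith
    rcases le_total y C with hyC | hCy
    · have anti : AntitoneOn F (Set.Icc 0 C) := by
        apply antitoneOn_of_deriv_nonpos (convex_Icc 0 C)
        · exact Continuous.continuousOn (by fun_prop)
        · intro t _; exact (hderiv t).differentiableAt.differentiableWithinAt
        · intro t ht
          rw [interior_Icc] at ht
          rw [(hderiv t).deriv]
          have := aux_ratio l hl0 hl1 ht.1 ht.2.le
          nlinarith
      have := anti ⟨hy, hyC⟩ ⟨hC.le, le_refl C⟩ hyC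
      linarith [hFC ▸ this]
    · have mono : MonotoneOn F (Set.Ici C) := by
        apply monotoneOn_of_deriv_nonneg (convex_Ici C)
        · exact Continuous.continuousOn (by fun_prop)
        · intro t _; exact (hderiv t).differentiableAt.differentiableWithinAt
        · intro t ht
          rw [interior_Ici] at ht
          rw [(hderiv t).deriv]
          have := aux_ratio l hl0 hl1 hC ht.le
          nlinarith
      have := mono Set.self_mem_Ici hCy hCy
      linarith [hFC ▸ this]
  rcases le_total 0 x with hx | hx
  · exact main x hx
  · have := main (-x) (by linarith)
    simpa [mul_neg, Real.cosh_neg] using this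

/-- If `E[cosh X] ≤ cosh C` then `E[cosh (λX)] ≤ cosh (λC)` for `C ≥ 0`, `λ ∈ [−1,1]`.
Since `cosh ≥ 0`, the expectations are taken as lower integrals in `ℝ≥0∞`. -/
theorem stmt3 {Ω : Type*} [MeasurableSpace Ω] (μ : Measure Ω) [IsProbabilityMeasure μ]
    (X : Ω → ℝ) (hX : Measurable X) (C : ℝ) (hC : 0 ≤ C) (l : ℝ) (hl : l ∈ Set.Icc (-1 : ℝ) 1)
    (h : ∫⁻ ω, ENNReal.ofReal (Real.cosh (X ω)) ∂μ ≤ ENNReal.ofReal (Real.cosh C)) :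
    ∫⁻ ω, ENNReal.ofReal (Real.cosh (l * X ω)) ∂μ ≤ ENNReal.ofReal (Real.cosh (l * C)) := by
  obtain ⟨hl1, hl2⟩ := hl
  have hlabs : |l| ≤ 1 := abs_le.2 ⟨hl1, hl2⟩
  have habs : ∀ x : ℝ, cosh (|l| * x) = cosh (l * x) := by
    intro x
    rcases abs_cases l with ⟨he, _⟩ | ⟨he, _⟩ <;> simp [he, neg_mul, Real.cosh_neg]
  have hcosh_le : ∀ x : ℝ, cosh (l * x) ≤ cosh x := by
    intro x
    apply Real.cosh_le_cosh.2
    rw [abs_mul]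
    calc |l| * |x| ≤ 1 * |x| := by gcongr
    _ = |x| := one_mul _
  rcases hC.eq_or_lt with rfl | hCpos
  · -- C = 0
    calc ∫⁻ ω, ENNReal.ofReal (cosh (l * X ω)) ∂μ
        ≤ ∫⁻ ω, ENNReal.ofReal (cosh (X ω)) ∂μ := by
          apply lintegral_mono fun ω => ENNReal.ofReal_le_ofReal (hcosh_le _)
      _ ≤ ENNReal.ofReal (cosh 0) := h
      _ = ENNReal.ofReal (cosh (l * 0)) := by rw [mul_zero]
  · -- C > 0
    have hsC : 0 < sinh C := sinh_pos_iff.2 hCpos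
    set a : ℝ := |l| * sinh (|l| * C) / sinh C with ha_def
    have ha : 0 ≤ a := by
      apply div_nonneg _ hsC.le
      exact mul_nonneg (abs_nonneg l) (sinh_nonneg_iff.2 (mul_nonneg (abs_nonneg l) hC))
    have key : ∀ x : ℝ, cosh (l * x) ≤ cosh (l * C) + a * (cosh x - cosh C) := by
      intro x
      have hk := aux_key |l| (abs_nonneg l) hlabs hCpos x
      rw [habs x, habs C] at hk
      have h2 : a * sinh C = |l| * sinh (|l| * C) := div_mul_cancel₀ _ hsC.ne'
      rw [← h2] at hk
      exact le_of_mul_le_mul_right (hk.trans (le_of_eq (by ring))) hsC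
    -- integrability
    have hcosh_pos : ∀ x : ℝ, (0:ℝ) ≤ cosh x := fun x => (Real.cosh_pos x).le
    have hf_int : Integrable (fun ω => cosh (X ω)) μ := by
      refine ⟨(hX.cosh).aestronglyMeasurable, ?_⟩
      rw [hasFiniteIntegral_iff_ofReal (ae_of_all _ fun ω => hcosh_pos _)]
      exact lt_of_le_of_lt h ENNReal.ofReal_lt_top
    have hg_int : Integrable (fun ω => cosh (l * X ω)) μ := by
      apply hf_int.mono' ((hX.const_mul l).cosh).aestronglyMeasurable
      exact ae_of_all _ fun ω => by
        rw [Real.norm_eq_abs, abs_of_nonneg (hcosh_pos _)]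
        exact hcosh_le _
    have hEf : ∫ ω, cosh (X ω) ∂μ ≤ cosh C := by
      have e1 := ofReal_integral_eq_lintegral_ofReal hf_int (ae_of_all _ fun ω => hcosh_pos _)
      rw [← ENNReal.ofReal_le_ofReal_iff (hcosh_pos C), e1]
      exact h
    have hsub : Integrable (fun ω => a * (cosh (X ω) - cosh C)) μ := by
      exact (hf_int.sub (integrable_const _)).const_mul a
    have hbound_int : Integrable (fun ω => cosh (l * C) + a * (cosh (X ω) - cosh C)) μ := by
      exact (integrable_const _).add hsub
    have hEg : ∫ ω, cosh (l * X ω) ∂μ ≤ cosh (l * C) := by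
      calc ∫ ω, cosh (l * X ω) ∂μ
          ≤ ∫ ω, (cosh (l * C) + a * (cosh (X ω) - cosh C)) ∂μ :=
            integral_mono hg_int hbound_int fun ω => key _
        _ = cosh (l * C) + a * ((∫ ω, cosh (X ω) ∂μ) - cosh C) := by
            rw [integral_add (integrable_const _) hsub,
              integral_const_mul, integral_sub hf_int (integrable_const _)]
            simp
        _ ≤ cosh (l * C) := by nlinarith
    rw [← ofReal_integral_eq_lintegral_ofReal hg_int (ae_of_all _ fun ω => hcosh_pos _)]
    exact ENNReal.ofReal_le_ofReal hEg
end

section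
/- There exists an absolute constant A ∈ (0,∞) such that for every real random variable X with E[X] = 0 and every C ≥ 0 with E[exp|X|] ≤ cosh C, one has E[exp(λX)] ≤ exp(A C² λ²) for all λ ∈ [−1,1]. In fact one can take A = sup_{x>0} ln(2 cosh x − 1)/x². -/
open MeasureTheory Real

private lemma derivLE {g g' : ℝ → ℝ} (hd : ∀ x, HasDerivAt g (g' x) x)
    {a b : ℝ} (hab : a ≤ b) (h0 : ∀ x, a ≤ x → x ≤ b → 0 ≤ g' x) : g a ≤ g b := by
  have hmono : MonotoneOn g (Set.Icc a b) := by
    apply monotoneOn_of_deriv_nonneg (convex_Icc a b)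
    · exact fun x _ => (hd x).continuousAt.continuousWithinAt
    · exact fun x _ => (hd x).differentiableAt.differentiableWithinAt
    · intro x hx
      rw [interior_Icc] at hx
      rw [(hd x).deriv]
      exact h0 x hx.1.le hx.2.le
  exact hmono (Set.left_mem_Icc.2 hab) (Set.right_mem_Icc.2 hab) hab

private lemma derivGE {g g' : ℝ → ℝ} (hd : ∀ x, HasDerivAt g (g' x) x)
    {a b : ℝ} (hab : a ≤ b) (h0 : ∀ x, a ≤ x → x ≤ b → g' x ≤ 0) : g b ≤ g a := by
  have := derivLE (g := fun x => -g x) (g' := fun x => -g' x)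
    (fun x => (hd x).neg) hab (fun x h1 h2 => by simpa using h0 x h1 h2)
  linarith

private lemma sinh_smul (s : ℝ) : ∀ x : ℝ, HasDerivAt (fun x => Real.sinh (s*x)) (s * Real.cosh (s*x)) x := by
  intro x
  simpa [mul_comm, Function.comp_def] using (Real.hasDerivAt_sinh (s*x)).comp x ((hasDerivAt_id x).const_mul s)

private lemma cosh_smul (s : ℝ) : ∀ x : ℝ, HasDerivAt (fun x => Real.cosh (s*x)) (s * Real.sinh (s*x)) x := by
  intro x
  simpa [mul_comm, Function.comp_def] using (Real.hasDerivAt_cosh (s*x)).comp x ((hasDerivAt_id x).const_mul s)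

-- B1a
private lemma B1a {s : ℝ} (hs0 : 0 ≤ s) (hs1 : s ≤ 1) {u : ℝ} (hu : 0 ≤ u) :
    s * Real.cosh (s*u) * Real.sinh u ≤ Real.sinh (s*u) * Real.cosh u := by
  have hd : ∀ x : ℝ, HasDerivAt (fun x => Real.sinh (s*x) * Real.cosh x - s * (Real.cosh (s*x) * Real.sinh x))
      ((1 - s^2) * (Real.sinh (s*x) * Real.sinh x)) x := by
    intro x
    have h1 := ((sinh_smul s x).mul (Real.hasDerivAt_cosh x)).sub
      (((cosh_smul s x).mul (Real.hasDerivAt_sinh x)).const_mul s)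
    exact h1.congr_deriv (by ring)
  have := derivLE hd hu (fun x h1 _ => by
    have hx1 : 0 ≤ Real.sinh (s*x) := Real.sinh_nonneg_iff.2 (by positivity)
    have hx2 : 0 ≤ Real.sinh x := Real.sinh_nonneg_iff.2 h1
    exact mul_nonneg (by nlinarith) (mul_nonneg hx1 hx2))
  simp only [mul_zero, Real.sinh_zero, Real.cosh_zero, zero_mul, mul_one] at this
  linarith

-- B1c : cross cosh inequality
private lemma B1c {s : ℝ} (hs0 : 0 ≤ s) (hs1 : s ≤ 1) {u v : ℝ} (hu : 0 ≤ u) (huv : u ≤ v) :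
    Real.cosh (s*v) * Real.cosh u ≤ Real.cosh (s*u) * Real.cosh v := by
  have h1 : Real.cosh (s*v + u) ≤ Real.cosh (v + s*u) := by
    rw [Real.cosh_le_cosh]
    rw [abs_of_nonneg (by nlinarith), abs_of_nonneg (by nlinarith)]
    nlinarith
  have h2 : Real.cosh (s*v - u) ≤ Real.cosh (v - s*u) := by
    rw [Real.cosh_le_cosh, abs_of_nonneg (by nlinarith : (0:ℝ) ≤ v - s*u)]
    rw [abs_le]
    constructor <;> nlinarith
  have e1 := Real.cosh_add (s*v) u
  have e2 := Real.cosh_sub (s*v) u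
  have e3 := Real.cosh_add v (s*u)
  have e4 := Real.cosh_sub v (s*u)
  linarith

-- B1b : sinh(s u)/sinh u decreasing (two-point form)
private lemma B1b {s : ℝ} (hs0 : 0 ≤ s) (hs1 : s ≤ 1) {u v : ℝ} (hu : 0 ≤ u) (huv : u ≤ v) :
    Real.sinh (s*v) * Real.sinh u ≤ Real.sinh (s*u) * Real.sinh v := by
  have hd : ∀ x : ℝ, HasDerivAt (fun x => Real.sinh (s*u) * Real.sinh x - Real.sinh (s*x) * Real.sinh u)
      (Real.sinh (s*u) * Real.cosh x - (s * Real.cosh (s*x) * Real.sinh u)) x := by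
    intro x
    have h1 := ((Real.hasDerivAt_sinh x).const_mul (Real.sinh (s*u))).sub
      ((sinh_smul s x).mul_const (Real.sinh u))
    exact h1
  have key := derivLE hd huv (fun x hx1 _ => by
    have hx0 : (0:ℝ) ≤ x := le_trans hu hx1
    have A1 := B1a hs0 hs1 hu
    have A2 := B1c hs0 hs1 hu hx1
    have p1 : (0:ℝ) < Real.cosh (s*u) := Real.cosh_pos _
    have p2 : (0:ℝ) ≤ Real.cosh (s*x) := (Real.cosh_pos _).le
    have p3 : (0:ℝ) ≤ Real.sinh (s*u) := Real.sinh_nonneg_iff.2 (by positivity)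
    have p4 : (0:ℝ) ≤ Real.sinh u := Real.sinh_nonneg_iff.2 hu
    -- s*cosh(s*x)*sinh u * cosh(s*u) ≤ sinh(s*u)*cosh u*cosh(s*x) ≤ sinh(s*u)*cosh(s*u)*cosh x
    have c1 : s * Real.cosh (s*x) * Real.sinh u * Real.cosh (s*u) ≤
        Real.sinh (s*u) * Real.cosh u * Real.cosh (s*x) := by nlinarith
    have c2 : Real.sinh (s*u) * Real.cosh u * Real.cosh (s*x) ≤
        Real.sinh (s*u) * (Real.cosh (s*u) * Real.cosh x) := by nlinarith
    nlinarith [c1.trans c2])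
  linarith [key]

-- tangent line inequality
private lemma tangent {s : ℝ} (hs0 : 0 ≤ s) (hs1 : s ≤ 1) {C : ℝ} (hC : 0 < C) {u : ℝ} (hu : 0 ≤ u) :
    Real.cosh (s*u) ≤ Real.cosh (s*C) + s * Real.sinh (s*C) / Real.sinh C * (Real.cosh u - Real.cosh C) := by
  have hsC : (0:ℝ) < Real.sinh C := Real.sinh_pos_iff.2 hC
  set b : ℝ := s * Real.sinh (s*C) / Real.sinh C with hb
  have hd : ∀ x : ℝ, HasDerivAt (fun x => Real.cosh (s*C) + b * (Real.cosh x - Real.cosh C) - Real.cosh (s*x))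
      (b * Real.sinh x - s * Real.sinh (s*x)) x := by
    intro x
    have h1 := ((((Real.hasDerivAt_cosh x).sub_const (Real.cosh C)).const_mul b).const_add
      (Real.cosh (s*C))).sub (cosh_smul s x)
    exact h1
  rcases le_total u C with hcase | hcase
  · have key := derivGE hd hcase (fun x hx1 hx2 => by
      have hx0 : (0:ℝ) ≤ x := le_trans hu hx1
      have hB := B1b hs0 hs1 hx0 hx2  -- sinh(s*C)*sinh x ≤ sinh(s*x)*sinh C
      rw [hb, div_mul_eq_mul_div, sub_nonpos, div_le_iff₀ hsC]
      nlinarith)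
    nlinarith [key]
  · have key := derivLE hd hcase (fun x hx1 _ => by
      have hB := B1b hs0 hs1 hC.le hx1  -- sinh(s*x)*sinh C ≤ sinh(s*C)*sinh x
      rw [hb, div_mul_eq_mul_div, sub_nonneg, le_div_iff₀ hsC]
      nlinarith)
    nlinarith [key]

private lemma lemA (y : ℝ) : Real.exp y ≤ y + (2 * Real.cosh y - 1) := by
  have h := Real.add_one_le_exp (-y)
  rw [Real.cosh_eq]
  linarith

private lemma cosh_le_exp_abs (x : ℝ) : Real.cosh x ≤ Real.exp |x| := by
  rw [Real.cosh_eq]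
  have h1 : Real.exp x ≤ Real.exp |x| := Real.exp_le_exp.2 (le_abs_self x)
  have h2 : Real.exp (-x) ≤ Real.exp |x| := Real.exp_le_exp.2 (neg_le_abs x)
  linarith

private lemma lemD (y : ℝ) : 2 * Real.cosh y - 1 ≤ Real.exp (2 * y^2) := by
  have h := Real.cosh_le_exp_half_sq y
  have ht : (1:ℝ) ≤ Real.exp (y^2/2) := Real.one_le_exp (by positivity)
  have he : Real.exp (2*y^2) = (Real.exp (y^2/2))^4 := by
    rw [← Real.exp_nat_mul]
    ring_nf
  rw [he]
  nlinarith [sq_nonneg (Real.exp (y^2/2)^2 - 1), sq_nonneg (Real.exp (y^2/2) - 1)]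


/-- There is an absolute constant `A ∈ (0,∞)` such that for every centered real random
variable `X` with `E[exp|X|] ≤ cosh C` (for some `C ≥ 0`), one has
`E[exp(λX)] ≤ exp(A C² λ²)` for all `λ ∈ [−1,1]`. -/
theorem stmt4 :
    ∃ A : ℝ, 0 < A ∧
      ∀ (Ω : Type) (_ : MeasurableSpace Ω) (μ : Measure Ω), IsProbabilityMeasure μ →
        ∀ (X : Ω → ℝ), Measurable X → Integrable X μ → (∫ ω, X ω ∂μ) = 0 →
          ∀ C : ℝ, 0 ≤ C →
            (∫⁻ ω, ENNReal.ofReal (Real.exp |X ω|) ∂μ) ≤ ENNReal.ofReal (Real.cosh C) →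
            ∀ l ∈ Set.Icc (-1 : ℝ) 1,
              (∫⁻ ω, ENNReal.ofReal (Real.exp (l * X ω)) ∂μ) ≤
                ENNReal.ofReal (Real.exp (A * C ^ 2 * l ^ 2)) := by
  refine ⟨2, by norm_num, ?_⟩
  intro Ω mΩ μ hμ X hXm hXint hX0 C hC hEexp l hl
  obtain ⟨hl1, hl2⟩ := Set.mem_Icc.1 hl
  have hlab : |l| ≤ 1 := abs_le.2 ⟨hl1, hl2⟩
  have habs : ∀ ω, Real.exp (l * X ω) ≤ Real.exp |X ω| := by
    intro ω
    apply Real.exp_le_exp.2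
    calc l * X ω ≤ |l * X ω| := le_abs_self _
      _ = |l| * |X ω| := abs_mul _ _
      _ ≤ 1 * |X ω| := by gcongr
      _ = |X ω| := one_mul _
  rcases eq_or_lt_of_le hC with hC0 | hCpos
  · -- C = 0
    calc (∫⁻ ω, ENNReal.ofReal (Real.exp (l * X ω)) ∂μ)
        ≤ ∫⁻ ω, ENNReal.ofReal (Real.exp |X ω|) ∂μ :=
          lintegral_mono fun ω => ENNReal.ofReal_le_ofReal (habs ω)
      _ ≤ ENNReal.ofReal (Real.cosh C) := hEexp
      _ ≤ ENNReal.ofReal (Real.exp (2 * C ^ 2 * l ^ 2)) := by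
          rw [← hC0]
          norm_num
  · -- C > 0
    have hmeas : Measurable fun ω => Real.exp |X ω| := Real.measurable_exp.comp hXm.abs
    have hint_expabs : Integrable (fun ω => Real.exp |X ω|) μ := by
      refine ⟨hmeas.aestronglyMeasurable, ?_⟩
      rw [hasFiniteIntegral_iff_ofReal (Filter.Eventually.of_forall fun ω => (Real.exp_pos _).le)]
      exact lt_of_le_of_lt hEexp ENNReal.ofReal_lt_top
    have hIexp_le : (∫ ω, Real.exp |X ω| ∂μ) ≤ Real.cosh C := by
      rw [← ENNReal.ofReal_le_ofReal_iff (Real.cosh_pos C).le,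
        ofReal_integral_eq_lintegral_ofReal hint_expabs
          (Filter.Eventually.of_forall fun ω => (Real.exp_pos _).le)]
      exact hEexp
    have hmeas_l : Measurable (fun ω => Real.exp (l * X ω)) := by fun_prop
    have hint_l : Integrable (fun ω => Real.exp (l * X ω)) μ := by
      apply Integrable.mono hint_expabs hmeas_l.aestronglyMeasurable
      filter_upwards with ω
      rw [Real.norm_eq_abs, Real.norm_eq_abs, Real.abs_exp, Real.abs_exp]
      exact habs ω
    set s : ℝ := |l| with hs
    have hs0 : 0 ≤ s := abs_nonneg l
    set b : ℝ := s * Real.sinh (s*C) / Real.sinh C with hb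
    have hbnn : 0 ≤ b := by
      apply div_nonneg _ (Real.sinh_pos_iff.2 hCpos).le
      exact mul_nonneg hs0 (Real.sinh_nonneg_iff.2 (by positivity))
    have hpt : ∀ ω, Real.exp (l * X ω) ≤
        l * X ω + (2 * Real.cosh (s*C) - 1) + 2*b*(Real.exp |X ω| - Real.cosh C) := by
      intro ω
      have h1 := lemA (l * X ω)
      have h2 : Real.cosh (l * X ω) = Real.cosh (s * |X ω|) := by
        rw [← Real.cosh_abs, abs_mul]
      have h3 := tangent hs0 hlab hCpos (abs_nonneg (X ω))
      rw [← hb] at h3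
      have h4 : Real.cosh |X ω| ≤ Real.exp |X ω| := by
        rw [Real.cosh_abs]; exact cosh_le_exp_abs (X ω)
      have h5 : b * (Real.cosh |X ω| - Real.cosh C) ≤ b * (Real.exp |X ω| - Real.cosh C) := by
        apply mul_le_mul_of_nonneg_left _ hbnn
        linarith
      rw [h2] at h1
      linarith
    have i1 : Integrable (fun ω => l * X ω) μ := hXint.const_mul l
    have i2 : Integrable (fun _ : Ω => (2 * Real.cosh (s*C) - 1)) μ := integrable_const _
    have i3 : Integrable (fun ω => Real.exp |X ω| - Real.cosh C) μ :=
      hint_expabs.sub (integrable_const _)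
    have i4 : Integrable (fun ω => 2*b*(Real.exp |X ω| - Real.cosh C)) μ := i3.const_mul _
    have i5 : Integrable (fun ω => l * X ω + (2 * Real.cosh (s*C) - 1)) μ := i1.add i2
    have hint_rhs : Integrable (fun ω =>
        l * X ω + (2 * Real.cosh (s*C) - 1) + 2*b*(Real.exp |X ω| - Real.cosh C)) μ := i5.add i4
    have hIl : (∫ ω, Real.exp (l * X ω) ∂μ) ≤ 2 * Real.cosh (s*C) - 1 := by
      have hmono := integral_mono hint_l hint_rhs hpt
      have hcomp : (∫ ω, (l * X ω + (2 * Real.cosh (s*C) - 1) + 2*b*(Real.exp |X ω| - Real.cosh C)) ∂μ)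
          = l * (∫ ω, X ω ∂μ) + (2 * Real.cosh (s*C) - 1)
            + 2*b*((∫ ω, Real.exp |X ω| ∂μ) - Real.cosh C) := by
        rw [integral_add i5 i4, integral_add i1 i2, integral_const_mul, integral_const_mul,
          integral_sub hint_expabs (integrable_const _), integral_const, integral_const]
        simp [measure_univ]
      rw [hcomp, hX0] at hmono
      have : 2*b*((∫ ω, Real.exp |X ω| ∂μ) - Real.cosh C) ≤ 0 := by
        apply mul_nonpos_of_nonneg_of_nonpos (by linarith)
        linarith
      linarith
    have hfinal : (∫ ω, Real.exp (l * X ω) ∂μ) ≤ Real.exp (2 * C ^ 2 * l ^ 2) := by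
      have hD := lemD (s*C)
      have : 2 * (s*C)^2 = 2 * C^2 * l^2 := by
        rw [hs, mul_pow, sq_abs]; ring
      rw [this] at hD
      linarith
    calc (∫⁻ ω, ENNReal.ofReal (Real.exp (l * X ω)) ∂μ)
        = ENNReal.ofReal (∫ ω, Real.exp (l * X ω) ∂μ) :=
          (ofReal_integral_eq_lintegral_ofReal hint_l
            (Filter.Eventually.of_forall fun ω => (Real.exp_pos _).le)).symm
      _ ≤ ENNReal.ofReal (Real.exp (2 * C ^ 2 * l ^ 2)) := ENNReal.ofReal_le_ofReal hfinal
end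

section
/- For every real random variable X, the following are equivalent: (a) there exists C < ∞ such that ln E[exp(λX)] ≤ C λ² for all λ ∈ [−1,1]; (b) E[exp|X|] < ∞ and E[X] = 0. -/
open MeasureTheory Real Nat

lemma exp_tsum' (t : ℝ) : Real.exp t = ∑' n : ℕ, t ^ n / n ! := by
  rw [Real.exp_eq_exp_ℝ, NormedSpace.exp_eq_tsum_div]

lemma summable_shift (t : ℝ) (k : ℕ) : Summable (fun n : ℕ => t ^ (n+k) / (n+k)!) := by
  have := (Real.summable_pow_div_factorial t).comp_injective (add_left_injective k)
  exact this

lemma exp_sub_eq (t : ℝ) : Real.exp t - 1 - t = ∑' n : ℕ, t ^ (n + 2) / (n + 2)! := by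
  have hs : Summable (fun n : ℕ => t ^ n / n !) := Real.summable_pow_div_factorial t
  have h1 : Summable (fun n : ℕ => t ^ (n+1) / (n+1)!) := summable_shift t 1
  have h0 := Summable.tsum_eq_zero_add hs
  have h0' := Summable.tsum_eq_zero_add h1
  rw [exp_tsum', h0, h0']
  simp [Nat.factorial_succ]

lemma key_pt (x l : ℝ) (hl : |l| ≤ 1) :
    Real.exp (l * x) ≤ 1 + l * x + l ^ 2 * Real.exp |x| := by
  have h1 : Real.exp (l * x) - 1 - l * x ≤ l ^ 2 * (Real.exp |x| - 1 - |x|) := by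
    rw [exp_sub_eq]
    have h2 : (∑' n : ℕ, l ^ 2 * (|x| ^ (n+2) / (n+2)!))
        = l ^ 2 * (Real.exp |x| - 1 - |x|) := by
      rw [exp_sub_eq |x|, tsum_mul_left]
    rw [← h2]
    refine Summable.tsum_le_tsum (fun n => ?_) (summable_shift (l*x) 2)
      (((summable_shift |x| 2)).mul_left _)
    calc (l * x) ^ (n+2) / (n+2)! ≤ |(l * x) ^ (n+2)| / (n+2)! := by
          gcongr; exact le_abs_self _
      _ = |l| ^ (n+2) * (|x| ^ (n+2) / (n+2)!) := by
          rw [abs_pow, abs_mul, mul_pow]; ring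
      _ ≤ l ^ 2 * (|x| ^ (n+2) / (n+2)!) := by
          have : |l| ^ (n+2) ≤ |l| ^ 2 :=
            pow_le_pow_of_le_one (abs_nonneg l) hl (by omega)
          rw [← sq_abs]
          gcongr
  nlinarith [Real.exp_pos |x|, abs_nonneg x, sq_nonneg l, Real.add_one_le_exp |x|]


lemma integrable_of_lint {Ω : Type*} [MeasurableSpace Ω] {μ : MeasureTheory.Measure Ω}
    {f : Ω → ℝ} (hm : Measurable f) (h0 : ∀ a, 0 ≤ f a)
    (h : (∫⁻ a, ENNReal.ofReal (f a) ∂μ) < ⊤) : MeasureTheory.Integrable f μ := by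
  refine ⟨hm.aestronglyMeasurable, ?_⟩
  rw [MeasureTheory.hasFiniteIntegral_iff_ofReal (Filter.Eventually.of_forall h0)]
  exact h

/-- For a real random variable `X`, the following are equivalent:
(a) there is `C < ∞` with `ln E[exp(λX)] ≤ Cλ²` for all `λ ∈ [−1,1]`;
(b) `E[exp|X|] < ∞` and `E[X] = 0`. -/
theorem stmt6 {Ω : Type*} [MeasurableSpace Ω] (μ : Measure Ω) [IsProbabilityMeasure μ]
    (X : Ω → ℝ) (hX : Measurable X) :
    (∃ C : ℝ, ∀ l ∈ Set.Icc (-1 : ℝ) 1,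
        (∫⁻ ω, ENNReal.ofReal (Real.exp (l * X ω)) ∂μ) ≤ ENNReal.ofReal (Real.exp (C * l ^ 2)))
      ↔ ((∫⁻ ω, ENNReal.ofReal (Real.exp |X ω|) ∂μ) < ⊤ ∧
          Integrable X μ ∧ (∫ ω, X ω ∂μ) = 0) := by
  have measE : Measurable fun ω => Real.exp |X ω| := Real.measurable_exp.comp hX.abs
  constructor
  · rintro ⟨C, hC⟩
    -- finiteness of ∫⁻ exp|X|
    have h1 := hC 1 (by norm_num)
    have hm1 := hC (-1) (by norm_num)
    have hfin : (∫⁻ ω, ENNReal.ofReal (Real.exp |X ω|) ∂μ) < ⊤ := by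
      have hpt : ∀ ω, ENNReal.ofReal (Real.exp |X ω|)
          ≤ ENNReal.ofReal (Real.exp (1 * X ω)) + ENNReal.ofReal (Real.exp ((-1) * X ω)) := by
        intro ω
        rcases abs_cases (X ω) with ⟨h, _⟩ | ⟨h, _⟩
        · rw [h]
          exact le_trans (by simp [ENNReal.ofReal_le_ofReal_iff, Real.exp_le_exp]) le_self_add
        · rw [h]
          refine le_add_left ?_
          simp [ENNReal.ofReal_le_ofReal_iff, (Real.exp_pos _).le]
      calc (∫⁻ ω, ENNReal.ofReal (Real.exp |X ω|) ∂μ)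
          ≤ ∫⁻ ω, (ENNReal.ofReal (Real.exp (1 * X ω))
              + ENNReal.ofReal (Real.exp ((-1) * X ω))) ∂μ := lintegral_mono hpt
        _ = (∫⁻ ω, ENNReal.ofReal (Real.exp (1 * X ω)) ∂μ)
              + ∫⁻ ω, ENNReal.ofReal (Real.exp ((-1) * X ω)) ∂μ := by
            apply lintegral_add_left
            exact (Real.measurable_exp.comp ((measurable_const.mul hX))).ennreal_ofReal
        _ ≤ ENNReal.ofReal (Real.exp (C * 1 ^ 2)) + ENNReal.ofReal (Real.exp (C * (-1) ^ 2)) :=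
            add_le_add h1 hm1
        _ < ⊤ := by simp [ENNReal.add_lt_top]
    have hexpInt : Integrable (fun ω => Real.exp |X ω|) μ :=
      integrable_of_lint measE (fun a => (Real.exp_pos _).le) hfin
    have hintX : Integrable X μ := by
      refine hexpInt.mono' hX.aestronglyMeasurable (Filter.Eventually.of_forall fun ω => ?_)
      rw [Real.norm_eq_abs]
      linarith [Real.add_one_le_exp |X ω|]
    refine ⟨hfin, hintX, ?_⟩
    -- mean zero
    have hIntExpL : ∀ l : ℝ, |l| ≤ 1 → Integrable (fun ω => Real.exp (l * X ω)) μ := by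
      intro l habs
      refine hexpInt.mono'
        ((Real.measurable_exp.comp (measurable_const.mul hX)).aestronglyMeasurable)
        (Filter.Eventually.of_forall fun ω => ?_)
      rw [Real.norm_eq_abs, abs_of_pos (Real.exp_pos _)]
      apply Real.exp_le_exp.2
      calc l * X ω ≤ |l * X ω| := le_abs_self _
        _ = |l| * |X ω| := abs_mul _ _
        _ ≤ 1 * |X ω| := mul_le_mul_of_nonneg_right habs (abs_nonneg _)
        _ = |X ω| := one_mul _
    set I := ∫ ω, X ω ∂μ with hI
    have key : ∀ l ∈ Set.Icc (-1:ℝ) 1, 1 + l * I ≤ Real.exp (C * l ^ 2) := by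
      intro l hl
      have habs : |l| ≤ 1 := abs_le.2 ⟨hl.1, hl.2⟩
      have hIl := hIntExpL l habs
      have h2 : ENNReal.ofReal (∫ ω, Real.exp (l * X ω) ∂μ)
          ≤ ENNReal.ofReal (Real.exp (C * l ^ 2)) := by
        rw [ofReal_integral_eq_lintegral_ofReal hIl
          (Filter.Eventually.of_forall fun ω => (Real.exp_pos _).le)]
        exact hC l hl
      have h3 : ∫ ω, Real.exp (l * X ω) ∂μ ≤ Real.exp (C * l ^ 2) :=
        (ENNReal.ofReal_le_ofReal_iff (Real.exp_pos _).le).1 h2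
      have h4 : 1 + l * I ≤ ∫ ω, Real.exp (l * X ω) ∂μ := by
        have heq : ∫ ω, (1 + l * X ω) ∂μ = 1 + l * I := by
          rw [integral_add (integrable_const 1) (hintX.const_mul l), integral_const,
            integral_const_mul]
          simp [hI]
        rw [← heq]
        refine integral_mono ((integrable_const 1).add (hintX.const_mul l)) hIl fun ω => ?_
        have := Real.add_one_le_exp (l * X ω)
        linarith
      linarith
    have hf0 : ∀ l ∈ Set.Icc (-1:ℝ) 1,
        (0:ℝ) ≤ Real.exp (C * l ^ 2) - 1 - l * I := fun l hl => by linarith [key l hl]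
    have hmin : IsLocalMin (fun l : ℝ => Real.exp (C * l ^ 2) - 1 - l * I) 0 := by
      have : ∀ᶠ l in nhds (0:ℝ), (0:ℝ) ≤ Real.exp (C * l ^ 2) - 1 - l * I := by
        filter_upwards [Icc_mem_nhds (by norm_num : (-1:ℝ) < 0) (by norm_num : (0:ℝ) < 1)]
          with l hl using hf0 l hl
      refine this.mono fun l hl => ?_
      simp only []
      norm_num
      linarith
    have hder : HasDerivAt (fun l : ℝ => Real.exp (C * l ^ 2) - 1 - l * I)
        (Real.exp (C * 0 ^ 2) * (C * (2 * 0 ^ 1)) - I) 0 := by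
      have h1 : HasDerivAt (fun l : ℝ => C * l ^ 2) (C * (2 * 0 ^ 1)) 0 := by
        simpa using ((hasDerivAt_pow 2 (0:ℝ)).const_mul C)
      exact ((h1.exp).sub_const 1).sub (hasDerivAt_mul_const I)
    have hd0 := hmin.deriv_eq_zero
    rw [hder.deriv] at hd0
    simpa using hd0
  · rintro ⟨hfin, hintX, hmean⟩
    have hexpInt : Integrable (fun ω => Real.exp |X ω|) μ :=
      integrable_of_lint measE (fun a => (Real.exp_pos _).le) hfin
    refine ⟨∫ ω, Real.exp |X ω| ∂μ, fun l hl => ?_⟩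
    set C := ∫ ω, Real.exp |X ω| ∂μ with hCdef
    have habs : |l| ≤ 1 := abs_le.2 ⟨hl.1, hl.2⟩
    have hIl : Integrable (fun ω => Real.exp (l * X ω)) μ := by
      refine hexpInt.mono'
        ((Real.measurable_exp.comp (measurable_const.mul hX)).aestronglyMeasurable)
        (Filter.Eventually.of_forall fun ω => ?_)
      rw [Real.norm_eq_abs, abs_of_pos (Real.exp_pos _)]
      apply Real.exp_le_exp.2
      calc l * X ω ≤ |l * X ω| := le_abs_self _
        _ = |l| * |X ω| := abs_mul _ _
        _ ≤ 1 * |X ω| := mul_le_mul_of_nonneg_right habs (abs_nonneg _)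
        _ = |X ω| := one_mul _
    rw [← ofReal_integral_eq_lintegral_ofReal hIl
      (Filter.Eventually.of_forall fun ω => (Real.exp_pos _).le)]
    apply ENNReal.ofReal_le_ofReal
    have hRHSint : Integrable (fun ω => 1 + l * X ω + l ^ 2 * Real.exp |X ω|) μ :=
      ((integrable_const 1).add (hintX.const_mul l)).add (hexpInt.const_mul _)
    calc ∫ ω, Real.exp (l * X ω) ∂μ
        ≤ ∫ ω, (1 + l * X ω + l ^ 2 * Real.exp |X ω|) ∂μ :=
          integral_mono hIl hRHSint fun ω => key_pt (X ω) l habs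
      _ = 1 + l ^ 2 * C := by
          have e1 : ∫ ω, (1 + l * X ω + l ^ 2 * Real.exp |X ω|) ∂μ
              = (∫ ω, (1 + l * X ω) ∂μ) + ∫ ω, l ^ 2 * Real.exp |X ω| ∂μ :=
            integral_add ((integrable_const 1).add (hintX.const_mul l)) (hexpInt.const_mul _)
          have e2 : ∫ ω, (1 + l * X ω) ∂μ = (∫ _ω, (1:ℝ) ∂μ) + ∫ ω, l * X ω ∂μ :=
            integral_add (integrable_const 1) (hintX.const_mul l)
          rw [e1, e2, integral_const, integral_const_mul, integral_const_mul, hmean]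
          simp [hCdef]
      _ ≤ Real.exp (C * l ^ 2) := by
          have := Real.add_one_le_exp (C * l ^ 2)
          linarith [this]
end

section
/- Let f : (0,∞) → [0,∞], C₀,…,C_n ≥ 0, and define recursively f₊[C₀,…,C_{k+1}] = (f₊[C₀,…,C_k])₊[C_{k+1}], where g₊[C](λ) = inf_{p ∈ [1/(1−λ),∞)} ((2/p) g(pλ) + (p/(p−1)) C λ²) for λ ∈ (0,1) and = ∞ for λ ≥ 1. Then for every λ with 0 < λ < 1/(n+1): (1/2^{n+1}) f₊[C₀,…,C_n](λ) ≤ (1 − (n+1)λ) f(λ/(1 − (n+1)λ)) + (λ/2) Σ_{k=0}^{n} 2^{−k} C_k. -/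
open MeasureTheory Real

/-- The upper duplication operation `f₊[C]`:
`f₊[C](λ) = inf_{p ≥ 1/(1−λ)} ((2/p) f(pλ) + (p/(p−1)) C λ²)` for `λ < 1`, and `∞` otherwise. -/
noncomputable def fplus (f : ℝ → ENNReal) (C : ℝ) (l : ℝ) : ENNReal :=
  if l < 1 then
    ⨅ p ∈ Set.Ici (1 / (1 - l)),
      ENNReal.ofReal (2 / p) * f (p * l) + ENNReal.ofReal (p / (p - 1) * C * l ^ 2)
  else ⊤

/-- The iterated operation `f₊[C₀,…,C_n]`, defined by
`f₊[C₀,…,C_{k+1}] = (f₊[C₀,…,C_k])₊[C_{k+1}]`. -/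
noncomputable def fplusIter (f : ℝ → ENNReal) (C : ℕ → ℝ) : ℕ → (ℝ → ENNReal)
  | 0 => fplus f (C 0)
  | n + 1 => fplus (fplusIter f C n) (C (n + 1))

lemma aux1 (f : ℝ → ENNReal) (c : ℝ) (l : ℝ) (hl0 : 0 < l) (hl1 : l < 1) :
    fplus f c l ≤ ENNReal.ofReal (2 * (1 - l)) * f (l / (1 - l)) + ENNReal.ofReal (c * l) := by
  have h1l : (0:ℝ) < 1 - l := by linarith
  rw [fplus, if_pos hl1]
  refine le_trans (iInf₂_le (1/(1-l)) (Set.mem_Ici.2 le_rfl)) (le_of_eq ?_)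
  have e1 : 2 / (1/(1-l)) = 2 * (1-l) := by field_simp
  have e2 : (1/(1-l)) * l = l/(1-l) := by rw [div_mul_eq_mul_div, one_mul]
  have e3 : (1/(1-l))/((1/(1-l))-1) * c * l^2 = c * l := by
    field_simp
    have hl := hl0.ne'; rw [sub_sub_cancel]; field_simp
  rw [e1, e2, e3]

lemma combo (u b : ℝ) (hu : 0 ≤ u) (a : ℝ) (X : ENNReal) :
    ENNReal.ofReal u * (ENNReal.ofReal a * X + ENNReal.ofReal b) =
      ENNReal.ofReal (u * a) * X + ENNReal.ofReal (u * b) := by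
  rw [mul_add, ← mul_assoc, ← ENNReal.ofReal_mul hu, ← ENNReal.ofReal_mul hu]

lemma aux2 (f : ℝ → ENNReal) (C : ℕ → ℝ) (hC : ∀ k, 0 ≤ C k) :
    ∀ n : ℕ, ∀ l : ℝ, 0 < l → l < 1 / ((n : ℝ) + 1) →
    fplusIter f C n l ≤ 2 ^ (n + 1) *
      (ENNReal.ofReal (1 - ((n : ℝ) + 1) * l) * f (l / (1 - ((n : ℝ) + 1) * l)) +
        ENNReal.ofReal (l / 2 * ∑ k ∈ Finset.range (n + 1), C k / 2 ^ k)) := by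
  have h2 : (2 : ENNReal) = ENNReal.ofReal 2 := by norm_num
  intro n
  induction n with
  | zero =>
    intro l hl0 hl1
    simp only [Nat.cast_zero, zero_add, one_mul, pow_one, Finset.sum_range_one, pow_zero,
      div_one] at hl1 ⊢
    refine le_trans (aux1 f (C 0) l hl0 (by linarith [hl1])) (le_of_eq ?_)
    rw [h2, combo 2 (l/2 * C 0) (by norm_num)]
    rw [show (2:ℝ) * (1 - l) = 2 * (1-l) from rfl, show C 0 * l = 2 * (l/2 * C 0) by ring]
  | succ n ih =>
    intro l hl0 hl1
    push_cast at hl1 ⊢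
    have hn2 : (0:ℝ) < (n:ℝ) + 1 + 1 := by positivity
    have key : ((n:ℝ) + 1 + 1) * l < 1 := by
      rw [← lt_div_iff₀' hn2]; exact hl1
    have hl1' : l < 1 := by nlinarith
    have h1l : (0:ℝ) < 1 - l := by linarith
    set l' := l / (1 - l) with hl'def
    have hl'0 : 0 < l' := by positivity
    have hl'1 : l' < 1 / ((n:ℝ) + 1) := by
      rw [hl'def, div_lt_div_iff₀ h1l (by positivity)]
      nlinarith
    have hden : (0:ℝ) < 1 - ((n:ℝ) + 1 + 1) * l := by linarith
    have hden' : (0:ℝ) < 1 - ((n:ℝ) + 1) * l' := by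
      have h := (lt_div_iff₀' (by positivity : (0:ℝ) < (n:ℝ)+1)).1 hl'1
      linarith
    have ed : 1 - ((n:ℝ) + 1) * l' = (1 - ((n:ℝ) + 1 + 1) * l) / (1 - l) := by
      rw [hl'def]; field_simp; ring
    have eA : l' / (1 - ((n:ℝ) + 1) * l') = l / (1 - ((n:ℝ) + 1 + 1) * l) := by
      rw [ed, hl'def, div_div_div_eq, mul_comm (1-l) _,
        mul_div_mul_right _ _ h1l.ne', mul_comm]
    have hsum : (0:ℝ) ≤ ∑ k ∈ Finset.range (n + 1), C k / 2 ^ k :=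
      Finset.sum_nonneg fun k _ => div_nonneg (hC k) (by positivity)
    set S := ∑ k ∈ Finset.range (n + 1), C k / 2 ^ k with hS
    have r1 : 2 * (1 - l) * (2 ^ (n+1) * (1 - ((n:ℝ) + 1) * l')) =
        2 ^ (n+1+1) * (1 - ((n:ℝ) + 1 + 1) * l) := by
      rw [ed]; field_simp; ring
    have r2 : 2 * (1 - l) * (2 ^ (n+1) * (l'/2 * S)) + C (n+1) * l =
        2 ^ (n+1+1) * (l/2 * (S + C (n+1) / 2 ^ (n+1))) := by
      rw [hl'def]; field_simp; ring
    calc fplusIter f C (n + 1) l = fplus (fplusIter f C n) (C (n + 1)) l := rfl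
      _ ≤ ENNReal.ofReal (2 * (1 - l)) * fplusIter f C n l' +
            ENNReal.ofReal (C (n + 1) * l) := aux1 _ _ l hl0 hl1'
      _ ≤ ENNReal.ofReal (2 * (1 - l)) * (2 ^ (n + 1) *
            (ENNReal.ofReal (1 - ((n : ℝ) + 1) * l') * f (l' / (1 - ((n : ℝ) + 1) * l')) +
              ENNReal.ofReal (l' / 2 * S))) +
            ENNReal.ofReal (C (n + 1) * l) := by
          gcongr
          exact ih l' hl'0 hl'1
      _ = 2 ^ (n + 1 + 1) *
            (ENNReal.ofReal (1 - ((n : ℝ) + 1 + 1) * l) * f (l / (1 - ((n : ℝ) + 1 + 1) * l)) +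
              ENNReal.ofReal (l / 2 * ∑ k ∈ Finset.range (n + 1 + 1), C k / 2 ^ k)) := by
          rw [eA, Finset.sum_range_succ, ← hS]
          rw [show ((2:ENNReal) ^ (n+1)) = ENNReal.ofReal (2 ^ (n+1)) by
            rw [h2, ← ENNReal.ofReal_pow (by norm_num)]]
          rw [show ((2:ENNReal) ^ (n+1+1)) = ENNReal.ofReal (2 ^ (n+1+1)) by
            rw [h2, ← ENNReal.ofReal_pow (by norm_num)]]
          rw [combo _ _ (by positivity : (0:ℝ) ≤ (2:ℝ)^(n+1)),
              combo _ _ (by linarith : (0:ℝ) ≤ 2 * (1 - l)),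
              combo _ _ (by positivity : (0:ℝ) ≤ (2:ℝ)^(n+1+1))]
          rw [add_assoc, ← ENNReal.ofReal_add
            (mul_nonneg (by linarith) (mul_nonneg (by positivity)
              (mul_nonneg (by positivity) hsum)))
            (mul_nonneg (hC _) hl0.le), r1, r2]

/-- For `0 < λ < 1/(n+1)`:
`(1/2^{n+1}) f₊[C₀,…,C_n](λ) ≤ (1 − (n+1)λ) f(λ/(1 − (n+1)λ)) + (λ/2) Σ_{k=0}^n 2^{−k} C_k`. -/
theorem stmt10 (f : ℝ → ENNReal) (C : ℕ → ℝ) (hC : ∀ k, 0 ≤ C k) (n : ℕ)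
    (l : ℝ) (hl0 : 0 < l) (hl1 : l < 1 / (n + 1)) :
    fplusIter f C n l / 2 ^ (n + 1) ≤
      ENNReal.ofReal (1 - (n + 1) * l) * f (l / (1 - (n + 1) * l)) +
        ENNReal.ofReal (l / 2 * ∑ k ∈ Finset.range (n + 1), C k / 2 ^ k) := by
  rw [ENNReal.div_le_iff (by positivity) (by simp [ENNReal.pow_ne_top])]
  rw [mul_comm]
  exact aux2 f C hC n l hl0 hl1
end

section
/- Let f : (0,∞) → [0,∞], C₀,…,C_n ≥ 0, define f₊[C](λ) = inf_{p ∈ [1/(1−λ),∞)} ((2/p) f(pλ) + (p/(p−1))Cλ²) for λ ∈ (0,1), ∞ otherwise, iterated as f₊[C₀,…,C_n]. Then for every ε ∈ (0,1) and every λ with 0 < λ ≤ ε · (min_{k≤n} 2^{−k/2}√C_k) / (Σ_{k≤n} 2^{−k/2}√C_k), one has (1/2^{n+1}) f₊[C₀,…,C_n](λ) ≤ (1−ε) f(λ/(1−ε)) + (λ²/(2ε)) (Σ_{k=0}^{n} 2^{−k/2}√C_k)². -/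
open MeasureTheory Real

private lemma alg (ε w Sn l : ℝ) (hε : 0 < ε) (hε1 : ε < 1) (hw : 0 < w) (hSn : 0 < Sn) :
    (1 - ε*w/(Sn+w)) * ((l/(1 - ε*w/(Sn+w)))^2/(2*((ε - ε*w/(Sn+w))/(1 - ε*w/(Sn+w)))) * Sn^2)
      + (w^2/2) * l^2 / (ε*w/(Sn+w)) = l^2/(2*ε) * (Sn+w)^2 := by
  have hS : 0 < Sn + w := by linarith
  have h1 : Sn + w - ε*w > 0 := by nlinarith
  have h2 : ε*(Sn+w) - ε*w > 0 := by nlinarith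
  have hS' : Sn + w ≠ 0 := ne_of_gt hS
  have hd1 : 1 - ε*w/(Sn+w) ≠ 0 := by
    rw [sub_ne_zero]
    intro h
    have : ε*w = Sn + w := by field_simp at h; linarith [h]
    nlinarith
  have hd2 : ε - ε*w/(Sn+w) ≠ 0 := by
    intro h
    have : ε*(Sn+w) - ε*w = 0 := by field_simp at h ⊢; linarith [h]
    nlinarith
  have hεw : ε*w ≠ 0 := by positivity
  have hSn0 : Sn ≠ 0 := ne_of_gt hSn
  field_simp
  ring_nf
  rw [pow_two Sn, mul_assoc (l^2) (Sn*Sn), mul_assoc Sn, mul_inv_cancel₀ hSn0, mul_one]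

private lemma fplus_le_choice (f : ℝ → ENNReal) (C l δ : ℝ) (hδ0 : 0 < δ) (hδ1 : δ < 1)
    (hlδ : l ≤ δ) :
    fplus f C l ≤ ENNReal.ofReal (2*(1-δ)) * f (l/(1-δ)) + ENNReal.ofReal (C * l^2 / δ) := by
  have hl1 : l < 1 := lt_of_le_of_lt hlδ hδ1
  have h1δ : 0 < 1 - δ := by linarith
  rw [fplus, if_pos hl1]
  have hmem : (1/(1-δ)) ∈ Set.Ici (1/(1-l)) := by
    rw [Set.mem_Ici]
    apply one_div_le_one_div_of_le h1δ
    linarith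
  refine le_trans (iInf₂_le (1/(1-δ)) hmem) ?_
  apply add_le_add
  · apply le_of_eq
    have e1 : 2 / (1/(1-δ)) = 2*(1-δ) := by field_simp
    have e2 : (1/(1-δ)) * l = l/(1-δ) := by ring
    rw [e1, e2]
  · apply le_of_eq
    congr 1
    have h : (1/(1-δ)) - 1 = δ/(1-δ) := by field_simp; ring
    rw [h]
    field_simp

private lemma pos_aux (w : ℕ → ℝ) (n : ℕ) (ε l : ℝ) (hε : 0 < ε) (hl0 : 0 < l)
    (hw : ∀ k, 0 ≤ w k)
    (hl : l ≤ ε * ((Finset.range (n+1)).inf' Finset.nonempty_range_add_one w) /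
      (∑ k ∈ Finset.range (n+1), w k)) :
    0 < (Finset.range (n+1)).inf' Finset.nonempty_range_add_one w := by
  by_contra h
  push_neg at h
  have hS : 0 ≤ ∑ k ∈ Finset.range (n+1), w k := Finset.sum_nonneg fun k _ => hw k
  rcases eq_or_lt_of_le hS with hS0 | hS0
  · rw [← hS0] at hl
    simp at hl
    linarith
  · have : ε * ((Finset.range (n+1)).inf' Finset.nonempty_range_add_one w) /
        (∑ k ∈ Finset.range (n+1), w k) ≤ 0 := by
      apply div_nonpos_of_nonpos_of_nonneg _ hS
      exact mul_nonpos_of_nonneg_of_nonpos (le_of_lt hε) h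
    linarith

set_option maxHeartbeats 1000000 in
private lemma key (f : ℝ → ENNReal) (C : ℕ → ℝ) (hC : ∀ k, 0 ≤ C k) :
    ∀ n : ℕ, ∀ ε : ℝ, 0 < ε → ε < 1 → ∀ l : ℝ, 0 < l →
    l ≤ ε * ((Finset.range (n + 1)).inf' Finset.nonempty_range_add_one
        fun k => Real.sqrt (C k / 2 ^ k)) /
        (∑ k ∈ Finset.range (n + 1), Real.sqrt (C k / 2 ^ k)) →
    fplusIter f C n l / 2 ^ (n + 1) ≤
      ENNReal.ofReal (1 - ε) * f (l / (1 - ε)) +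
        ENNReal.ofReal (l ^ 2 / (2 * ε) *
          (∑ k ∈ Finset.range (n + 1), Real.sqrt (C k / 2 ^ k)) ^ 2) := by
  set w : ℕ → ℝ := fun k => Real.sqrt (C k / 2 ^ k) with hwdef
  have hw : ∀ k, 0 ≤ w k := fun k => Real.sqrt_nonneg _
  have hwsq : ∀ k, (w k)^2 = C k / 2^k :=
    fun k => Real.sq_sqrt (div_nonneg (hC k) (by positivity))
  intro n
  induction n with
  | zero =>
    intro ε hε0 hε1 l hl0 hl
    have hm := pos_aux w 0 ε l hε0 hl0 hw hl
    have hm0 : (Finset.range 1).inf' Finset.nonempty_range_add_one w = w 0 := by simp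
    rw [hm0] at hm hl
    rw [Finset.sum_range_one] at hl ⊢
    rw [show Real.sqrt (C 0 / 2^0) = w 0 from rfl] at hl
    have hw0 : w 0 ≠ 0 := ne_of_gt hm
    have hlε : l ≤ ε := by
      rwa [mul_div_assoc, div_self hw0, mul_one] at hl
    calc fplusIter f C 0 l / 2 ^ 1
        ≤ (ENNReal.ofReal (2*(1-ε)) * f (l/(1-ε)) + ENNReal.ofReal (C 0 * l^2 / ε)) / 2^1 := by
          apply ENNReal.div_le_div_right
          exact fplus_le_choice f (C 0) l ε hε0 hε1 hlε
      _ = ENNReal.ofReal (1-ε) * f (l/(1-ε)) + ENNReal.ofReal (l^2/(2*ε) * (w 0)^2) := by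
          rw [pow_one, ENNReal.add_div]
          congr 1
          · rw [ENNReal.ofReal_mul (by norm_num : (0:ℝ) ≤ 2)]
            simp only [ENNReal.ofReal_ofNat]
            rw [mul_assoc, mul_comm (2:ENNReal), mul_div_assoc,
              ENNReal.div_self (by norm_num) (by norm_num), mul_one]
          · rw [show ((2:ENNReal)) = ENNReal.ofReal 2 by simp,
              ← ENNReal.ofReal_div_of_pos (by norm_num)]
            congr 1
            rw [hwsq 0]
            field_simp
  | succ n ih =>
    intro ε hε0 hε1 l hl0 hl
    have hm' := pos_aux w (n+1) ε l hε0 hl0 hw hl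
    set m' := (Finset.range (n+2)).inf' Finset.nonempty_range_add_one w with hm'def
    set m := (Finset.range (n+1)).inf' Finset.nonempty_range_add_one w with hmdef
    set Sn := ∑ k ∈ Finset.range (n+1), w k with hSndef
    have hSsum : ∑ k ∈ Finset.range (n+2), w k = Sn + w (n+1) := Finset.sum_range_succ w (n+1)
    rw [hSsum] at hl
    have hwk : ∀ k ∈ Finset.range (n+2), m' ≤ w k := fun k hk => Finset.inf'_le w hk
    have hwn : 0 < w (n+1) := lt_of_lt_of_le hm' (hwk (n+1) (by simp))
    have hSn : 0 < Sn := Finset.sum_pos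
      (fun k hk => lt_of_lt_of_le hm' (hwk k (by simp at hk ⊢; omega))) ⟨0, by simp⟩
    have hm'm : m' ≤ m := by
      apply Finset.le_inf'
      intro k hk
      exact hwk k (by simp at hk ⊢; omega)
    have hS0 : 0 < Sn + w (n+1) := by linarith
    set δ : ℝ := ε * w (n+1) / (Sn + w (n+1)) with hδdef
    have hδ0 : 0 < δ := div_pos (mul_pos hε0 hwn) hS0
    have hδε : δ < ε := by
      rw [hδdef, div_lt_iff₀ hS0]
      nlinarith
    have hδ1 : δ < 1 := lt_trans hδε hε1
    have h1δ : 0 < 1 - δ := by linarith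
    have hlδ : l ≤ δ := by
      refine le_trans hl ?_
      rw [hδdef]
      gcongr
      exact hwk (n+1) (by simp)
    set ε' : ℝ := (ε - δ)/(1 - δ) with hε'def
    have hε'0 : 0 < ε' := div_pos (by linarith) h1δ
    have hε'1 : ε' < 1 := by rw [hε'def, div_lt_one h1δ]; linarith
    set l' : ℝ := l/(1-δ) with hl'def
    have hl'0 : 0 < l' := div_pos hl0 h1δ
    have hεδ : ε - δ = ε * Sn / (Sn + w (n+1)) := by
      rw [hδdef]; field_simp; ring
    have hl' : l' ≤ ε' * m / Sn := by
      have key2 : l ≤ (ε - δ) * m / Sn := by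
        rw [hεδ]
        have e : ε * Sn / (Sn + w (n+1)) * m / Sn = ε * m / (Sn + w (n+1)) := by
          field_simp
        rw [e]
        refine le_trans hl ?_
        gcongr
      calc l' = l/(1-δ) := hl'def
        _ ≤ ((ε - δ) * m / Sn)/(1-δ) := by gcongr
        _ = ε' * m / Sn := by rw [hε'def]; ring
    have hIH := ih ε' hε'0 hε'1 l' hl'0 hl'
    have hll : l'/(1-ε') = l/(1-ε) := by
      have h1ε' : 1 - ε' = (1-ε)/(1-δ) := by rw [hε'def]; field_simp; ring
      rw [hl'def, h1ε', div_div_div_cancel_right₀]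
      exact ne_of_gt h1δ
    have hofp : ((2:ENNReal)^(n+2)) = ENNReal.ofReal ((2:ℝ)^(n+2)) := by
      rw [ENNReal.ofReal_pow (by norm_num)]
      norm_num
    calc fplusIter f C (n+1) l / 2 ^ (n+1+1)
        ≤ (ENNReal.ofReal (2*(1-δ)) * fplusIter f C n l'
            + ENNReal.ofReal (C (n+1) * l^2/δ)) / 2^(n+2) := by
          apply ENNReal.div_le_div_right
          have h := fplus_le_choice (fplusIter f C n) (C (n+1)) l δ hδ0 hδ1 hlδ
          rw [← hl'def] at h
          exact h
      _ = ENNReal.ofReal (1-δ) * (fplusIter f C n l' / 2^(n+1))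
            + ENNReal.ofReal (C (n+1) * l^2/δ / 2^(n+2)) := by
          rw [ENNReal.add_div]
          congr 1
          · rw [ENNReal.ofReal_mul (by norm_num : (0:ℝ) ≤ 2)]
            simp only [ENNReal.ofReal_ofNat]
            rw [mul_assoc, pow_succ, mul_comm ((2:ENNReal)^(n+1)) 2,
              ENNReal.mul_div_mul_left _ _ (by norm_num) (by norm_num), mul_div_assoc]
          · rw [hofp, ← ENNReal.ofReal_div_of_pos (by positivity)]
      _ ≤ ENNReal.ofReal (1-δ) * (ENNReal.ofReal (1-ε') * f (l'/(1-ε'))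
            + ENNReal.ofReal (l'^2/(2*ε') * Sn^2)) + ENNReal.ofReal (C (n+1)*l^2/δ/2^(n+2)) := by
          gcongr
      _ = ENNReal.ofReal (1-ε) * f (l/(1-ε)) + ENNReal.ofReal (l^2/(2*ε)*(Sn + w (n+1))^2) := by
          rw [hll, mul_add, ← mul_assoc, ← ENNReal.ofReal_mul (by linarith : (0:ℝ) ≤ 1-δ)]
          have e1 : (1-δ)*(1-ε') = 1-ε := by rw [hε'def]; field_simp; ring
          rw [e1, add_assoc]
          congr 1
          rw [← ENNReal.ofReal_mul (by linarith : (0:ℝ) ≤ 1-δ),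
            ← ENNReal.ofReal_add]
          · congr 1
            have halg := alg ε (w (n+1)) Sn l hε0 hε1 hwn hSn
            have hterm : C (n+1) * l^2/δ / 2^(n+2) = ((w (n+1))^2/2) * l^2 / δ := by
              have hcw : C (n+1) = (w (n+1))^2 * 2^(n+1) := by
                rw [hwsq]; exact (div_mul_cancel₀ _ (by positivity : ((2:ℝ)^(n+1)) ≠ 0)).symm
              have h2 : (2:ℝ)^(n+2) = 2^(n+1)*2 := pow_succ 2 (n+1)
              have h2n : ((2:ℝ)^(n+1)) ≠ 0 := by positivity
              rw [hcw, h2]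
              field_simp
            rw [hterm, hl'def, hε'def, hδdef, ← halg]
          · have : (0:ℝ) ≤ l'^2/(2*ε') := div_nonneg (sq_nonneg _) (by linarith)
            exact mul_nonneg (by linarith) (mul_nonneg this (sq_nonneg _))
          · have : (0:ℝ) ≤ C (n+1)*l^2/δ := div_nonneg (mul_nonneg (hC _) (sq_nonneg _)) hδ0.le
            positivity
      _ = ENNReal.ofReal (1-ε) * f (l/(1-ε))
          + ENNReal.ofReal (l^2/(2*ε)*(∑ k ∈ Finset.range (n+1+1), w k)^2) := by
          rw [hSsum]

/-- For every `ε ∈ (0,1)` and every `λ` with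
`0 < λ ≤ ε·(min_{k≤n} 2^{−k/2}√C_k)/(Σ_{k≤n} 2^{−k/2}√C_k)` (note `2^{−k/2}√C_k = √(C_k/2^k)`):
`(1/2^{n+1}) f₊[C₀,…,C_n](λ) ≤ (1−ε) f(λ/(1−ε)) + (λ²/(2ε)) (Σ_{k=0}^n 2^{−k/2}√C_k)²`. -/
theorem stmt12 (f : ℝ → ENNReal) (C : ℕ → ℝ) (hC : ∀ k, 0 ≤ C k) (n : ℕ)
    (ε : ℝ) (hε0 : 0 < ε) (hε1 : ε < 1) (l : ℝ) (hl0 : 0 < l)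
    (hl : l ≤ ε * ((Finset.range (n + 1)).inf' (by simp) fun k => Real.sqrt (C k / 2 ^ k)) /
        (∑ k ∈ Finset.range (n + 1), Real.sqrt (C k / 2 ^ k))) :
    fplusIter f C n l / 2 ^ (n + 1) ≤
      ENNReal.ofReal (1 - ε) * f (l / (1 - ε)) +
        ENNReal.ofReal (l ^ 2 / (2 * ε) *
          (∑ k ∈ Finset.range (n + 1), Real.sqrt (C k / 2 ^ k)) ^ 2) := by
  exact key f C hC n ε hε0 hε1 l hl0 hl
end

section
/- Suppose Y is a C-duplication of X, meaning there exist random variables X₁, X₂, Z on some probability space with X₁, X₂ independent, X₁, X₂ each distributed like X, X₁+X₂+Z distributed like Y, and ln E[exp(λZ)] ≤ Cλ² for all λ ∈ [−1,1]. If E[exp(ε|X|)] < ∞ for some ε > 0, then E[exp(δ|Y|)] < ∞ for some δ > 0 (in fact δ = ε/(1+ε) works), and E[Y] = 2 E[X]. -/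
open MeasureTheory ProbabilityTheory Real


-- transport lemmas
lemma aux_lint {Ω Ω' : Type*} [MeasurableSpace Ω] [MeasurableSpace Ω']
    {P : Measure Ω} {μ : Measure Ω'} {W : Ω → ℝ} {X : Ω' → ℝ}
    (hW : Measurable W) (hX : Measurable X) (hmap : P.map W = μ.map X)
    {g : ℝ → ENNReal} (hg : Measurable g) :
    ∫⁻ ω, g (W ω) ∂P = ∫⁻ ω, g (X ω) ∂μ := by
  rw [← lintegral_map hg hW, hmap, lintegral_map hg hX]

lemma aux_int {Ω Ω' : Type*} [MeasurableSpace Ω] [MeasurableSpace Ω']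
    {P : Measure Ω} {μ : Measure Ω'} {W : Ω → ℝ} {X : Ω' → ℝ}
    (hW : Measurable W) (hX : Measurable X) (hmap : P.map W = μ.map X) :
    ∫ ω, W ω ∂P = ∫ ω, X ω ∂μ := by
  have h1 : ∫ ω, W ω ∂P = ∫ x, x ∂(P.map W) :=
    (integral_map hW.aemeasurable aestronglyMeasurable_id).symm
  have h2 : ∫ x, x ∂(μ.map X) = ∫ ω, X ω ∂μ :=
    integral_map hX.aemeasurable aestronglyMeasurable_id
  rw [h1, hmap, h2]

lemma aux_meas (c : ℝ) : Measurable (fun x : ℝ => ENNReal.ofReal (Real.exp (c * |x|))) :=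
  ENNReal.measurable_ofReal.comp (Real.measurable_exp.comp (measurable_abs.const_mul c))

lemma aux_integrable {Ω : Type*} [MeasurableSpace Ω] {P : Measure Ω}
    {W : Ω → ℝ} (hW : Measurable W) {c : ℝ} (hc : 0 < c)
    (h : ∫⁻ ω, ENNReal.ofReal (Real.exp (c * |W ω|)) ∂P ≠ ⊤) : Integrable W P := by
  refine ⟨hW.aestronglyMeasurable, ?_⟩
  have hb : ∀ ω, (‖W ω‖₊ : ENNReal) ≤
      ENNReal.ofReal c⁻¹ * ENNReal.ofReal (Real.exp (c * |W ω|)) := by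
    intro ω
    rw [← enorm_eq_nnnorm, ← ofReal_norm, ← ENNReal.ofReal_mul (by positivity)]
    apply ENNReal.ofReal_le_ofReal
    rw [Real.norm_eq_abs]
    have h1 := Real.add_one_le_exp (c * |W ω|)
    rw [inv_mul_eq_div, le_div_iff₀ hc, mul_comm]
    nlinarith [abs_nonneg (W ω)]
  have : HasFiniteIntegral W P := by
    rw [hasFiniteIntegral_def]
    calc ∫⁻ ω, (‖W ω‖₊ : ENNReal) ∂P
        ≤ ∫⁻ ω, ENNReal.ofReal c⁻¹ * ENNReal.ofReal (Real.exp (c * |W ω|)) ∂P :=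
          lintegral_mono hb
      _ = ENNReal.ofReal c⁻¹ * ∫⁻ ω, ENNReal.ofReal (Real.exp (c * |W ω|)) ∂P :=
          lintegral_const_mul' _ _ ENNReal.ofReal_ne_top
      _ < ⊤ := ENNReal.mul_lt_top ENNReal.ofReal_lt_top h.lt_top
  exact this


/-- `Y` (on `(Ω₂, ν)`) is a `C`-duplication of `X` (on `(Ω₁, μ)`): there exist random
variables `X₁, X₂, Z` on some probability space such that `X₁, X₂` are independent,
`X₁, X₂` are each distributed like `X`, `X₁ + X₂ + Z` is distributed like `Y`, and
`ln E[exp(λZ)] ≤ Cλ²` for all `λ ∈ [−1,1]`. -/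
def IsCDuplication {Ω₁ Ω₂ : Type*} [MeasurableSpace Ω₁] [MeasurableSpace Ω₂]
    (μ : Measure Ω₁) (ν : Measure Ω₂) (X : Ω₁ → ℝ) (Y : Ω₂ → ℝ) (C : ℝ) : Prop :=
  ∃ (Ω : Type) (_ : MeasurableSpace Ω) (P : Measure Ω) (X₁ X₂ Z : Ω → ℝ),
    IsProbabilityMeasure P ∧
    Measurable X₁ ∧ Measurable X₂ ∧ Measurable Z ∧
    IndepFun X₁ X₂ P ∧
    P.map X₁ = μ.map X ∧ P.map X₂ = μ.map X ∧
    P.map (fun ω => X₁ ω + X₂ ω + Z ω) = ν.map Y ∧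
    ∀ l ∈ Set.Icc (-1 : ℝ) 1,
      (∫⁻ ω, ENNReal.ofReal (Real.exp (l * Z ω)) ∂P) ≤ ENNReal.ofReal (Real.exp (C * l ^ 2))

/-- If `Y` is a `C`-duplication of `X` and `E[exp(ε|X|)] < ∞` for some `ε > 0`, then
`E[exp(δ|Y|)] < ∞` for `δ = ε/(1+ε) > 0`, and `E[Y] = 2 E[X]`. -/
theorem stmt13 {Ω₁ Ω₂ : Type*} [MeasurableSpace Ω₁] [MeasurableSpace Ω₂]
    (μ : Measure Ω₁) (ν : Measure Ω₂) [IsProbabilityMeasure μ] [IsProbabilityMeasure ν]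
    (X : Ω₁ → ℝ) (Y : Ω₂ → ℝ) (hX : Measurable X) (hY : Measurable Y)
    (C : ℝ) (hC : 0 ≤ C) (hdup : IsCDuplication μ ν X Y C)
    (ε : ℝ) (hε : 0 < ε)
    (hmom : (∫⁻ ω, ENNReal.ofReal (Real.exp (ε * |X ω|)) ∂μ) < ⊤) :
    (∫⁻ ω, ENNReal.ofReal (Real.exp (ε / (1 + ε) * |Y ω|)) ∂ν) < ⊤ ∧
      (∫ ω, Y ω ∂ν) = 2 * ∫ ω, X ω ∂μ := by
  unfold IsCDuplication at hdup
  obtain ⟨Ω, mΩ, P, X₁, X₂, Z, hP, hX₁, hX₂, hZ, hind, hmap₁, hmap₂, hmapS, hmgf⟩ := hdup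
  have h1ε : (0:ℝ) < 1 + ε := by linarith
  set δ := ε / (1 + ε) with hδdef
  have hδpos : 0 < δ := div_pos hε h1ε
  set S : Ω → ℝ := fun ω => X₁ ω + X₂ ω + Z ω with hSdef
  have hS : Measurable S := (hX₁.add hX₂).add hZ
  -- finiteness of exp moments of X₁, X₂ under P
  have hA₁ : ∫⁻ ω, ENNReal.ofReal (Real.exp (ε * |X₁ ω|)) ∂P
      = ∫⁻ ω, ENNReal.ofReal (Real.exp (ε * |X ω|)) ∂μ := aux_lint hX₁ hX hmap₁ (aux_meas ε)
  have hA₂ : ∫⁻ ω, ENNReal.ofReal (Real.exp (ε * |X₂ ω|)) ∂P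
      = ∫⁻ ω, ENNReal.ofReal (Real.exp (ε * |X ω|)) ∂μ := aux_lint hX₂ hX hmap₂ (aux_meas ε)
  -- exp |Z| moment
  have hZexp : ∫⁻ ω, ENNReal.ofReal (Real.exp |Z ω|) ∂P
      ≤ ENNReal.ofReal (Real.exp C) + ENNReal.ofReal (Real.exp C) := by
    have hb : ∀ ω, ENNReal.ofReal (Real.exp |Z ω|)
        ≤ ENNReal.ofReal (Real.exp (1 * Z ω)) + ENNReal.ofReal (Real.exp ((-1) * Z ω)) := by
      intro ω
      rw [← ENNReal.ofReal_add (Real.exp_nonneg _) (Real.exp_nonneg _)]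
      apply ENNReal.ofReal_le_ofReal
      rcases abs_cases (Z ω) with ⟨h1, _⟩ | ⟨h1, _⟩ <;>
        simp only [h1, one_mul, neg_one_mul] <;> nlinarith [Real.exp_pos (Z ω), Real.exp_pos (-Z ω)]
    calc ∫⁻ ω, ENNReal.ofReal (Real.exp |Z ω|) ∂P
        ≤ ∫⁻ ω, (ENNReal.ofReal (Real.exp (1 * Z ω)) + ENNReal.ofReal (Real.exp ((-1) * Z ω))) ∂P :=
          lintegral_mono hb
      _ = (∫⁻ ω, ENNReal.ofReal (Real.exp (1 * Z ω)) ∂P)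
          + ∫⁻ ω, ENNReal.ofReal (Real.exp ((-1) * Z ω)) ∂P := by
          apply lintegral_add_left
          exact ENNReal.measurable_ofReal.comp (Real.measurable_exp.comp (hZ.const_mul 1))
      _ ≤ ENNReal.ofReal (Real.exp (C * 1 ^ 2)) + ENNReal.ofReal (Real.exp (C * (-1) ^ 2)) := by
          gcongr
          · exact hmgf 1 ⟨by norm_num, le_refl 1⟩
          · exact hmgf (-1) ⟨le_refl _, by norm_num⟩
      _ = ENNReal.ofReal (Real.exp C) + ENNReal.ofReal (Real.exp C) := by norm_num
  have hZfin : ∫⁻ ω, ENNReal.ofReal (Real.exp (1 * |Z ω|)) ∂P < ⊤ := by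
    simp only [one_mul]
    exact lt_of_le_of_lt hZexp (by finiteness)
  -- exp moment of X₁ + X₂
  have hS₂fin : ∫⁻ ω, ENNReal.ofReal (Real.exp (ε * |X₁ ω + X₂ ω|)) ∂P < ⊤ := by
    have hb : ∀ ω, ENNReal.ofReal (Real.exp (ε * |X₁ ω + X₂ ω|))
        ≤ ENNReal.ofReal (Real.exp (ε * |X₁ ω|)) * ENNReal.ofReal (Real.exp (ε * |X₂ ω|)) := by
      intro ω
      rw [← ENNReal.ofReal_mul (Real.exp_nonneg _), ← Real.exp_add]
      apply ENNReal.ofReal_le_ofReal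
      apply Real.exp_le_exp.mpr
      rw [← mul_add]
      exact mul_le_mul_of_nonneg_left (abs_add_le _ _) hε.le
    have hprod : ∫⁻ ω, ENNReal.ofReal (Real.exp (ε * |X₁ ω|)) * ENNReal.ofReal (Real.exp (ε * |X₂ ω|)) ∂P
        = (∫⁻ ω, ENNReal.ofReal (Real.exp (ε * |X₁ ω|)) ∂P)
          * ∫⁻ ω, ENNReal.ofReal (Real.exp (ε * |X₂ ω|)) ∂P := by
      apply lintegral_mul_eq_lintegral_mul_lintegral_of_indepFun''
        ((aux_meas ε).comp hX₁).aemeasurable ((aux_meas ε).comp hX₂).aemeasurable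
      exact hind.comp (aux_meas ε) (aux_meas ε)
    calc ∫⁻ ω, ENNReal.ofReal (Real.exp (ε * |X₁ ω + X₂ ω|)) ∂P
        ≤ ∫⁻ ω, ENNReal.ofReal (Real.exp (ε * |X₁ ω|)) * ENNReal.ofReal (Real.exp (ε * |X₂ ω|)) ∂P :=
          lintegral_mono hb
      _ = _ := hprod
      _ < ⊤ := by rw [hA₁, hA₂]; exact ENNReal.mul_lt_top hmom hmom
  -- main Hölder step
  have hmain : ∫⁻ ω, ENNReal.ofReal (Real.exp (δ * |Y ω|)) ∂ν < ⊤ := by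
    have htrans : ∫⁻ ω, ENNReal.ofReal (Real.exp (δ * |Y ω|)) ∂ν
        = ∫⁻ ω, ENNReal.ofReal (Real.exp (δ * |S ω|)) ∂P :=
      (aux_lint hS hY hmapS (aux_meas δ)).symm
    rw [htrans]
    set f : Ω → ENNReal := fun ω => ENNReal.ofReal (Real.exp (δ * |X₁ ω + X₂ ω|)) with hfdef
    set g : Ω → ENNReal := fun ω => ENNReal.ofReal (Real.exp (δ * |Z ω|)) with hgdef
    have hfm : Measurable f := (aux_meas δ).comp (hX₁.add hX₂)
    have hgm : Measurable g := (aux_meas δ).comp hZ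
    have hpq : Real.HolderConjugate (1 + ε) ((1 + ε) / ε) := by
      rw [Real.holderConjugate_iff]
      constructor
      · linarith
      · field_simp
    have hstep1 : ∫⁻ ω, ENNReal.ofReal (Real.exp (δ * |S ω|)) ∂P ≤ ∫⁻ ω, (f * g) ω ∂P := by
      apply lintegral_mono
      intro ω
      simp only [hfdef, hgdef, Pi.mul_apply, hSdef]
      rw [← ENNReal.ofReal_mul (Real.exp_nonneg _), ← Real.exp_add]
      apply ENNReal.ofReal_le_ofReal
      apply Real.exp_le_exp.mpr
      rw [← mul_add]
      exact mul_le_mul_of_nonneg_left (abs_add_le _ _) hδpos.le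
    have hstep2 := ENNReal.lintegral_mul_le_Lp_mul_Lq P hpq hfm.aemeasurable hgm.aemeasurable
    have hfp : ∀ ω, f ω ^ (1 + ε) = ENNReal.ofReal (Real.exp (ε * |X₁ ω + X₂ ω|)) := by
      intro ω
      rw [hfdef]
      rw [ENNReal.ofReal_rpow_of_pos (Real.exp_pos _)]
      congr 1
      rw [Real.rpow_def_of_pos (Real.exp_pos _), Real.log_exp]
      congr 1
      rw [hδdef]; field_simp
    have hgq : ∀ ω, g ω ^ ((1 + ε) / ε) = ENNReal.ofReal (Real.exp (1 * |Z ω|)) := by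
      intro ω
      rw [hgdef]
      rw [ENNReal.ofReal_rpow_of_pos (Real.exp_pos _)]
      congr 1
      rw [Real.rpow_def_of_pos (Real.exp_pos _), Real.log_exp]
      congr 1
      rw [hδdef]; field_simp
    simp only [hfp, hgq] at hstep2
    refine lt_of_le_of_lt (le_trans hstep1 hstep2) ?_
    apply ENNReal.mul_lt_top
    · exact ENNReal.rpow_lt_top_of_nonneg (by positivity) hS₂fin.ne
    · exact ENNReal.rpow_lt_top_of_nonneg (by positivity) hZfin.ne
  refine ⟨hmain, ?_⟩
  -- integrabilities
  have hXint : Integrable X μ := aux_integrable hX hε hmom.ne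
  have hX₁int : Integrable X₁ P := aux_integrable hX₁ hε (hA₁ ▸ hmom.ne)
  have hX₂int : Integrable X₂ P := aux_integrable hX₂ hε (hA₂ ▸ hmom.ne)
  have hZint : Integrable Z P := aux_integrable hZ one_pos hZfin.ne
  -- E[Z] = 0
  have hexpint : ∀ l ∈ Set.Icc (-1:ℝ) 1, Integrable (fun ω => Real.exp (l * Z ω)) P := by
    intro l hl
    refine ⟨(Real.measurable_exp.comp (hZ.const_mul l)).aestronglyMeasurable, ?_⟩
    rw [hasFiniteIntegral_def]
    have : ∀ ω, (‖Real.exp (l * Z ω)‖₊ : ENNReal) = ENNReal.ofReal (Real.exp (l * Z ω)) := by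
      intro ω
      rw [← enorm_eq_nnnorm, ← ofReal_norm, Real.norm_eq_abs, abs_of_pos (Real.exp_pos _)]
    simp_rw [enorm_eq_nnnorm, this]
    exact lt_of_le_of_lt (hmgf l hl) (by finiteness)
  have hkey : ∀ l ∈ Set.Icc (-1:ℝ) 1, l * ∫ ω, Z ω ∂P ≤ Real.exp (C * l ^ 2) - 1 := by
    intro l hl
    have hmono : ∫ ω, l * Z ω ∂P ≤ ∫ ω, (Real.exp (l * Z ω) - 1) ∂P := by
      apply integral_mono (hZint.const_mul l) ((hexpint l hl).sub (integrable_const 1))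
      intro ω
      have := Real.add_one_le_exp (l * Z ω)
      simp only [Pi.sub_apply]
      linarith
    rw [integral_const_mul] at hmono
    rw [integral_sub (hexpint l hl) (integrable_const 1), integral_const] at hmono
    simp only [Measure.real, measure_univ, ENNReal.toReal_one, smul_eq_mul, one_mul] at hmono
    have hle : ∫ ω, Real.exp (l * Z ω) ∂P ≤ Real.exp (C * l ^ 2) := by
      rw [integral_eq_lintegral_of_nonneg_ae (Filter.Eventually.of_forall fun ω => (Real.exp_pos _).le)
        (Real.measurable_exp.comp (hZ.const_mul l)).aestronglyMeasurable]
      exact ENNReal.toReal_le_of_le_ofReal (Real.exp_nonneg _) (hmgf l hl)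
    linarith
  have hEZabs : ∀ t : ℝ, 0 < t → t ≤ 1 → |∫ ω, Z ω ∂P| ≤ C * t * Real.exp C := by
    intro t ht ht1
    have h1 := hkey t ⟨by linarith, ht1⟩
    have h2 := hkey (-t) ⟨by linarith, by linarith⟩
    rw [neg_mul] at h2
    have hsq : (-t) ^ 2 = t ^ 2 := by ring
    rw [hsq] at h2
    have hbound : Real.exp (C * t ^ 2) - 1 ≤ C * t ^ 2 * Real.exp C := by
      have hx : 0 ≤ C * t ^ 2 := by positivity
      have ht2 : t ^ 2 ≤ 1 := by nlinarith
      have hxle : C * t ^ 2 ≤ C := by nlinarith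
      have e1 : Real.exp (-(C * t ^ 2)) * Real.exp (C * t ^ 2) = 1 := by
        rw [← Real.exp_add]; simp
      have h3 : 1 - C * t ^ 2 ≤ Real.exp (-(C * t ^ 2)) := by
        linarith [Real.add_one_le_exp (-(C * t ^ 2))]
      have h4 : Real.exp (C * t ^ 2) ≤ Real.exp C := Real.exp_le_exp.mpr hxle
      have h5 := mul_le_mul_of_nonneg_right h3 (Real.exp_pos (C * t ^ 2)).le
      rw [e1] at h5
      nlinarith [Real.exp_pos (C * t ^ 2)]
    rw [abs_le]
    constructor
    · nlinarith
    · nlinarith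
  have hEZ : ∫ ω, Z ω ∂P = 0 := by
    have habs : ∀ η : ℝ, 0 < η → |∫ ω, Z ω ∂P| ≤ η := by
      intro η hη
      have hD : 0 < (C + 1) * Real.exp C := by positivity
      set t := min 1 (η / ((C + 1) * Real.exp C)) with htdef
      have htpos : 0 < t := lt_min one_pos (div_pos hη hD)
      have ht1 : t ≤ 1 := min_le_left _ _
      have h := hEZabs t htpos ht1
      have ht2 : t ≤ η / ((C + 1) * Real.exp C) := min_le_right _ _
      have h2 : C * t * Real.exp C ≤ η := by
        rw [le_div_iff₀ hD] at ht2
        nlinarith [Real.exp_pos C, htpos.le]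
      linarith
    have h0 : |∫ ω, Z ω ∂P| ≤ 0 := by
      by_contra h
      push_neg at h
      have := habs (|∫ ω, Z ω ∂P| / 2) (by linarith)
      linarith
    exact abs_eq_zero.mp (le_antisymm h0 (abs_nonneg _))
  -- means
  have hYeq : ∫ ω, Y ω ∂ν = ∫ ω, S ω ∂P := (aux_int hS hY hmapS).symm
  have hX₁eq : ∫ ω, X₁ ω ∂P = ∫ ω, X ω ∂μ := aux_int hX₁ hX hmap₁
  have hX₂eq : ∫ ω, X₂ ω ∂P = ∫ ω, X ω ∂μ := aux_int hX₂ hX hmap₂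
  rw [hYeq]
  have : ∫ ω, S ω ∂P = (∫ ω, X₁ ω ∂P) + (∫ ω, X₂ ω ∂P) + ∫ ω, Z ω ∂P := by
    calc ∫ ω, S ω ∂P = ∫ ω, ((X₁ ω + X₂ ω) + Z ω) ∂P := rfl
      _ = (∫ ω, (X₁ ω + X₂ ω) ∂P) + ∫ ω, Z ω ∂P :=
          integral_add (hX₁int.add hX₂int) hZint
      _ = (∫ ω, X₁ ω ∂P) + (∫ ω, X₂ ω ∂P) + ∫ ω, Z ω ∂P := by
          rw [integral_add hX₁int hX₂int]
  rw [this, hX₁eq, hX₂eq, hEZ]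
  ring
end
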